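/- For integers 1 ≤ k ≤ n, the polynomial (1−D)^n x^k has degree k, is real-rooted, and its smallest root is at least (1 − √(k/n))² · n = (√n − √k)². -/

import Mathlib

open Polynomial

/-- A real polynomial is real-rooted if it splits over `ℝ`
(equivalently, all of its complex roots are real). -/
def RealRooted (p : Polynomial ℝ) : Prop := p.Splits

/-- The operator `(1 - D) f = f - f'` on univariate real polynomials. -/
noncomputable def oneSubD (f : Polynomial ℝ) : Polynomial ℝ :=
  f - Polynomial.derivative f


section LaguerreAux
open Set Filter Topology

/-- eval of the product of (X - r) over a multiset. -/
lemma eval_prodXsub (R : Multiset ℝ) (b : ℝ) :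
    eval b (R.map fun a => X - C a).prod = (R.map fun a => b - a).prod := by
  rw [eval_multiset_prod, Multiset.map_map]
  congr 1; apply Multiset.map_congr rfl; intro a _; simp

lemma eval_prodXsub_ne_zero {R : Multiset ℝ} {b : ℝ} (h : ∀ r ∈ R, r ≠ b) :
    eval b (R.map fun a => X - C a).prod ≠ 0 := by
  rw [eval_prodXsub]
  apply Multiset.prod_ne_zero
  intro h0
  rw [Multiset.mem_map] at h0
  obtain ⟨a, haR, ha⟩ := h0
  exact h a haR (by linarith [sub_eq_zero.mp ha])

lemma eval_deriv_prodXsub (R : Multiset ℝ) (b : ℝ) (h : ∀ r ∈ R, r ≠ b) :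
    eval b (derivative (R.map fun a => X - C a).prod) =
      eval b (R.map fun a => X - C a).prod * (R.map fun r => (b - r)⁻¹).sum := by
  induction R using Multiset.induction_on with
  | empty => simp
  | cons a R ih =>
    have ha : a ≠ b := h a (Multiset.mem_cons_self _ _)
    have hR : ∀ r ∈ R, r ≠ b := fun r hr => h r (Multiset.mem_cons_of_mem hr)
    have hba : b - a ≠ 0 := sub_ne_zero.mpr (fun e => ha e.symm)
    simp only [Multiset.map_cons, Multiset.prod_cons, Multiset.sum_cons,
      derivative_mul, derivative_sub, derivative_X, derivative_C, sub_zero, eval_add, eval_mul,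
      eval_sub, eval_X, eval_C, eval_one, one_mul, ih hR]
    field_simp

lemma eval_deriv2_prodXsub (R : Multiset ℝ) (b : ℝ) (h : ∀ r ∈ R, r ≠ b) :
    eval b (derivative (derivative (R.map fun a => X - C a).prod)) =
      eval b (R.map fun a => X - C a).prod *
        (((R.map fun r => (b - r)⁻¹).sum) ^ 2 - (R.map fun r => ((b - r)⁻¹) ^ 2).sum) := by
  induction R using Multiset.induction_on with
  | empty => simp
  | cons a R ih =>
    have ha : a ≠ b := h a (Multiset.mem_cons_self _ _)
    have hR : ∀ r ∈ R, r ≠ b := fun r hr => h r (Multiset.mem_cons_of_mem hr)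
    have hba : b - a ≠ 0 := sub_ne_zero.mpr (fun e => ha e.symm)
    simp only [Multiset.map_cons, Multiset.prod_cons, Multiset.sum_cons,
      derivative_mul, derivative_sub, derivative_X, derivative_C, sub_zero, derivative_add,
      derivative_one, zero_mul, zero_add, eval_add, eval_mul, eval_sub, eval_X, eval_C,
      eval_one, one_mul, ih hR, eval_deriv_prodXsub R b hR]
    field_simp
    ring

lemma oneSubD_monic_natDegree {p : ℝ[X]} (hm : p.Monic) (hd : 1 ≤ p.natDegree) :
    (oneSubD p).Monic ∧ (oneSubD p).natDegree = p.natDegree := by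
  have hp0 : p ≠ 0 := hm.ne_zero
  have hlt : (derivative p).degree < p.degree := degree_derivative_lt hp0
  constructor
  · have : oneSubD p = p + -(derivative p) := by rw [oneSubD]; ring
    rw [this]
    exact hm.add_of_left (by rwa [degree_neg])
  · have : (oneSubD p).degree = p.degree := degree_sub_eq_left_of_degree_lt hlt
    exact natDegree_eq_of_degree_eq this

private lemma hasDerivAt_expmul (p : ℝ[X]) (x : ℝ) :
    HasDerivAt (fun x => Real.exp (-x) * p.eval x)
      (Real.exp (-x) * (p.eval x * (-1)) + Real.exp (-x) * (derivative p).eval x) x := by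
  have h1 : HasDerivAt (fun x : ℝ => Real.exp (-x)) (Real.exp (-x) * (-1)) x := by
    have := (Real.hasDerivAt_exp (-x)).comp x ((hasDerivAt_id x).neg)
    simpa [Function.comp_def] using this
  have h2 := p.hasDerivAt x
  have := h1.fun_mul h2
  refine this.congr_deriv ?_
  ring

/-- If `p z = 0` at both endpoints, `oneSubD p` has a root strictly between. -/
lemma exists_oneSubD_root_between {p : ℝ[X]} {x y : ℝ} (hxy : x < y)
    (hx : p.IsRoot x) (hy : p.IsRoot y) : ∃ z ∈ Ioo x y, (oneSubD p).IsRoot z := by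
  set f : ℝ → ℝ := fun x => Real.exp (-x) * p.eval x with hf
  set f' : ℝ → ℝ := fun x => Real.exp (-x) * (p.eval x * (-1)) + Real.exp (-x) * (derivative p).eval x with hf'
  have hd : ∀ t, HasDerivAt f (f' t) t := fun t => hasDerivAt_expmul p t
  have hc : ContinuousOn f (Icc x y) := fun t _ => (hd t).continuousAt.continuousWithinAt
  have hfI : f x = f y := by simp [hf, hx.eq_zero, hy.eq_zero]
  obtain ⟨z, hz, hz0⟩ := exists_hasDerivAt_eq_zero hxy hc hfI (fun t _ => hd t)
  refine ⟨z, hz, ?_⟩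
  have he : Real.exp (-z) ≠ 0 := Real.exp_ne_zero _
  have : Real.exp (-z) * ((derivative p).eval z - p.eval z) = 0 := by
    have h0 : Real.exp (-z) * (eval z p * -1) + Real.exp (-z) * eval z (derivative p) = 0 := hz0
    ring_nf
    ring_nf at h0
    linarith
  have h2 : (derivative p).eval z - p.eval z = 0 := by
    rcases mul_eq_zero.mp this with h | h
    · exact absurd h he
    · exact h
  simp only [IsRoot, oneSubD, eval_sub]
  linarith

/-- If `p M = 0`, then `oneSubD p` has a root strictly beyond `M`. -/
lemma exists_oneSubD_root_beyond {p : ℝ[X]} (hp : p ≠ 0) {M : ℝ} (hM : p.IsRoot M) :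
    ∃ z, M < z ∧ (oneSubD p).IsRoot z := by
  set f : ℝ → ℝ := fun x => Real.exp (-x) * p.eval x with hf
  set g : ℝ → ℝ := fun x => (f x) ^ 2 with hg
  -- choose b > M with p b ≠ 0
  obtain ⟨b, hbM, hbroot⟩ : ∃ b, M < b ∧ ¬ p.IsRoot b := by
    have hfin := Polynomial.finite_setOf_isRoot hp
    have := (Set.Ioi_infinite M).exists_notMem_finset hfin.toFinset
    obtain ⟨b, hb1, hb2⟩ := this
    exact ⟨b, hb1, fun h => hb2 (by simpa using h)⟩
  have hgb : 0 < g b := by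
    have : f b ≠ 0 := mul_ne_zero (Real.exp_ne_zero _) hbroot
    positivity
  -- g tends to 0 at +∞
  have hg0 : Tendsto g atTop (𝓝 0) := by
    have h1 : Tendsto f atTop (𝓝 0) := by
      have := p.tendsto_div_exp_atTop
      refine this.congr' ?_
      filter_upwards [eventually_ge_atTop 0] with x _
      simp only [hf, Real.exp_neg]
      field_simp
    have := h1.mul h1
    simpa [hg, sq] using this
  -- choose c ≥ b+1 with g < g b beyond c
  obtain ⟨c₀, hc₀⟩ := eventually_atTop.mp (hg0.eventually_lt_const hgb)
  set c : ℝ := max c₀ (b + 1) with hc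
  have hbc : b < c := lt_of_lt_of_le (by linarith) (le_max_right _ _)
  have hMc : M < c := hbM.trans hbc
  have hgc : g c < g b := hc₀ c (le_max_left _ _)
  -- max of g on [M, c]
  have hgcont : Continuous g := by
    have hfc : Continuous f := Continuous.mul (Real.continuous_exp.comp continuous_neg) p.continuous_aeval
    exact hfc.pow 2
  obtain ⟨z, hzmem, hzmax⟩ := isCompact_Icc.exists_isMaxOn (Set.nonempty_Icc.mpr hMc.le) hgcont.continuousOn
  have hbmem : b ∈ Icc M c := ⟨hbM.le, hbc.le⟩
  have hgz : g b ≤ g z := hzmax hbmem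
  have hzM : M < z := by
    rcases lt_or_eq_of_le hzmem.1 with h | h
    · exact h
    · exfalso
      have : g M = 0 := by simp [hg, hf, hM.eq_zero]
      rw [← h] at hgz
      linarith
  have hzc : z < c := by
    rcases lt_or_eq_of_le hzmem.2 with h | h
    · exact h
    · exfalso; rw [h] at hgz; linarith
  -- local max → derivative zero
  have hloc : IsLocalMax g z := hzmax.isLocalMax (Icc_mem_nhds hzM hzc)
  have hdg : HasDerivAt g (2 * f z * ((p.eval z * (-1)) * Real.exp (-z) + Real.exp (-z) * (derivative p).eval z)) z := by
    have h1 := hasDerivAt_expmul p z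
    have := h1.fun_pow 2
    refine this.congr_deriv ?_
    push_cast
    ring
  have h0 := hloc.hasDerivAt_eq_zero hdg
  refine ⟨z, hzM, ?_⟩
  have hfz : f z ≠ 0 := by
    intro h; rw [hg] at hgz
    have : g z = 0 := by simp [hg, h]
    have : (0:ℝ) < 0 := lt_of_lt_of_le hgb (this ▸ hgz)
    linarith
  have he : Real.exp (-z) ≠ 0 := Real.exp_ne_zero _
  have h2 : (p.eval z * (-1)) * Real.exp (-z) + Real.exp (-z) * (derivative p).eval z = 0 := by
    rcases mul_eq_zero.mp h0 with h | h
    · exfalso; rcases mul_eq_zero.mp h with h' | h'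
      · norm_num at h'
      · exact hfz h'
    · exact h
  have h3 : Real.exp (-z) * ((derivative p).eval z - p.eval z) = 0 := by ring_nf; ring_nf at h2; linarith
  have h4 : (derivative p).eval z - p.eval z = 0 := by
    rcases mul_eq_zero.mp h3 with h | h
    · exact absurd h he
    · exact h
  simp only [IsRoot, oneSubD, eval_sub]
  linarith

lemma oneSubD_ne_zero {p : ℝ[X]} (hp : p ≠ 0) : oneSubD p ≠ 0 := by
  have : (oneSubD p).degree = p.degree := degree_sub_eq_left_of_degree_lt (degree_derivative_lt hp)
  intro h
  rw [h, degree_zero] at this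
  exact hp (degree_eq_bot.mp this.symm)

lemma rootMultiplicity_oneSubD {p : ℝ[X]} (hp : p ≠ 0) (x : ℝ) :
    p.rootMultiplicity x - 1 ≤ (oneSubD p).rootMultiplicity x := by
  set m := p.rootMultiplicity x with hm
  rcases Nat.eq_zero_or_pos m with h | h
  · simp [h]
  have h1 : (X - C x) ^ (m - 1) ∣ p :=
    dvd_trans (pow_dvd_pow _ (Nat.sub_le m 1)) (p.pow_rootMultiplicity_dvd x)
  have h2 : (X - C x) ^ (m - 1) ∣ derivative p := by
    rcases eq_or_ne (derivative p) 0 with h0 | h0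
    · simp [h0]
    · rw [← le_rootMultiplicity_iff h0]
      exact p.rootMultiplicity_sub_one_le_derivative_rootMultiplicity x
  have h3 : (X - C x) ^ (m - 1) ∣ oneSubD p := dvd_sub h1 h2
  rwa [← le_rootMultiplicity_iff (oneSubD_ne_zero hp)] at h3

/-- Root-count preservation: `oneSubD p` has at least as many real roots as `p`. -/
lemma card_roots_le_oneSubD (p : ℝ[X]) (hp : p ≠ 0) :
    Multiset.card p.roots ≤ Multiset.card (oneSubD p).roots := by
  classical
  set q := oneSubD p with hq
  have hq0 : q ≠ 0 := oneSubD_ne_zero hp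
  set pF := p.roots.toFinset with hpF
  set qF := q.roots.toFinset with hqF
  have hmemF : ∀ x, x ∈ pF ↔ p.IsRoot x := by
    intro x; rw [hpF, Multiset.mem_toFinset, mem_roots hp]
  rcases pF.eq_empty_or_nonempty with hemp | hne
  · have : p.roots = 0 := Multiset.toFinset_eq_empty.mp hemp
    simp [this]
  set M := pF.max' hne with hM
  have hmemQ : ∀ x, x ∈ qF ↔ q.IsRoot x := by
    intro x; rw [hqF, Multiset.mem_toFinset, mem_roots hq0]
  have hMroot : p.IsRoot M := (hmemF M).mp (pF.max'_mem hne)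
  obtain ⟨zstar, hzM, hzroot⟩ := exists_oneSubD_root_beyond hp hMroot
  set t := qF.filter (· ≤ M) with ht
  -- interleaving
  have hinter : pF.card ≤ (t \ pF).card + 1 := by
    apply Finset.card_le_diff_of_interleaved
    intro x hx y hy hxy _
    obtain ⟨z, hz, hzr⟩ := exists_oneSubD_root_between hxy ((hmemF x).mp hx) ((hmemF y).mp hy)
    refine ⟨z, ?_, hz.1, hz.2⟩
    rw [ht, Finset.mem_filter]
    constructor
    · exact (hmemQ z).mpr hzr
    · have : y ≤ M := Finset.le_max' _ _ hy
      linarith [hz.2]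
  -- the extra root
  have hzqF : zstar ∈ qF \ pF := by
    rw [Finset.mem_sdiff]
    constructor
    · exact (hmemQ zstar).mpr hzroot
    · intro hmem
      have : zstar ≤ M := Finset.le_max' _ _ hmem
      linarith
  have hznt : zstar ∉ t := by
    rw [ht, Finset.mem_filter]
    rintro ⟨-, hle⟩
    linarith
  have hsub : insert zstar (t \ pF) ⊆ qF \ pF := by
    intro w hw
    rcases Finset.mem_insert.mp hw with rfl | hw
    · exact hzqF
    · rw [Finset.mem_sdiff] at hw ⊢
      exact ⟨(Finset.mem_filter.mp hw.1).1, hw.2⟩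
  have hcard2 : pF.card ≤ (qF \ pF).card := by
    calc pF.card ≤ (t \ pF).card + 1 := hinter
    _ = (insert zstar (t \ pF)).card := by
        rw [Finset.card_insert_of_notMem (fun h => hznt (Finset.mem_sdiff.mp h).1)]
    _ ≤ (qF \ pF).card := Finset.card_le_card hsub
  -- now count
  calc Multiset.card p.roots
      = ∑ x ∈ pF, p.roots.count x := (Multiset.toFinset_sum_count_eq _).symm
    _ = ∑ x ∈ pF, (p.rootMultiplicity x - 1) + pF.card := by
        rw [Finset.card_eq_sum_ones, ← Finset.sum_add_distrib]
        refine Finset.sum_congr rfl fun x hx => ?_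
        rw [count_roots]
        have : 0 < p.rootMultiplicity x := (Polynomial.rootMultiplicity_pos hp).mpr ((hmemF x).mp hx)
        omega
    _ ≤ ∑ x ∈ pF, q.roots.count x + (qF \ pF).card := by
        gcongr with x hx
        · rw [count_roots q]; exact rootMultiplicity_oneSubD hp x
    _ ≤ ∑ x ∈ pF, q.roots.count x + ∑ x ∈ qF \ pF, q.roots.count x := by
        gcongr
        rw [Finset.card_eq_sum_ones]
        refine Finset.sum_le_sum fun x hx => ?_
        have hxq : x ∈ qF := (Finset.mem_sdiff.mp hx).1
        have : q.IsRoot x := (hmemQ x).mp hxq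
        exact Multiset.count_pos.mpr (by rwa [mem_roots hq0])
    _ = ∑ x ∈ pF ∪ (qF \ pF), q.roots.count x := by
        rw [Finset.sum_union]
        exact Finset.disjoint_right.mpr fun a ha => (Finset.mem_sdiff.mp ha).2
    _ ≤ ∑ x ∈ qF, q.roots.count x := by
        have he : ∑ x ∈ pF ∪ (qF \ pF), q.roots.count x
            = ∑ x ∈ (pF ∪ (qF \ pF)) ∩ qF, q.roots.count x := by
          refine (Finset.sum_subset Finset.inter_subset_left ?_).symm
          intro x hx hnx
          rw [Multiset.count_eq_zero]
          intro hmem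
          exact hnx (Finset.mem_inter.mpr ⟨hx, (hmemQ x).mpr ((mem_roots hq0).mp hmem)⟩)
        rw [he]
        exact Finset.sum_le_sum_of_subset Finset.inter_subset_right
    _ = Multiset.card q.roots := Multiset.toFinset_sum_count_eq _

lemma msum_nonneg {R : Multiset ℝ} {f : ℝ → ℝ} (h : ∀ x ∈ R, 0 ≤ f x) :
    0 ≤ (R.map f).sum := by
  apply Multiset.sum_nonneg
  intro y hy
  obtain ⟨x, hx, rfl⟩ := Multiset.mem_map.mp hy
  exact h x hx

lemma msum_nonpos {R : Multiset ℝ} {f : ℝ → ℝ} (h : ∀ x ∈ R, f x ≤ 0) :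
    (R.map f).sum ≤ 0 := by
  induction R using Multiset.induction_on with
  | empty => simp
  | cons a R ih =>
    simp only [Multiset.map_cons, Multiset.sum_cons]
    have := h a (Multiset.mem_cons_self _ _)
    have := ih (fun x hx => h x (Multiset.mem_cons_of_mem hx))
    linarith

lemma msum_sub (R : Multiset ℝ) (f g : ℝ → ℝ) :
    (R.map fun x => f x - g x).sum = (R.map f).sum - (R.map g).sum := by
  induction R using Multiset.induction_on with
  | empty => simp
  | cons a R ih => simp only [Multiset.map_cons, Multiset.sum_cons, ih]; ring

lemma msum_add (R : Multiset ℝ) (f g : ℝ → ℝ) :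
    (R.map fun x => f x + g x).sum = (R.map f).sum + (R.map g).sum := by
  induction R using Multiset.induction_on with
  | empty => simp
  | cons a R ih => simp only [Multiset.map_cons, Multiset.sum_cons, ih]; ring

lemma msum_mul_left (R : Multiset ℝ) (c : ℝ) (f : ℝ → ℝ) :
    (R.map fun x => c * f x).sum = c * (R.map f).sum := by
  induction R using Multiset.induction_on with
  | empty => simp
  | cons a R ih => simp only [Multiset.map_cons, Multiset.sum_cons, ih]; ring

lemma msum_neg (R : Multiset ℝ) (f : ℝ → ℝ) :
    (R.map fun x => -(f x)).sum = -((R.map f).sum) := by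
  induction R using Multiset.induction_on with
  | empty => simp
  | cons a R ih => simp only [Multiset.map_cons, Multiset.sum_cons, ih]; ring

lemma multiset_cauchy (R : Multiset ℝ) (t u : ℝ → ℝ) (ht : ∀ x ∈ R, 0 ≤ t x) :
    ((R.map fun x => t x * u x).sum) ^ 2 ≤
      (R.map t).sum * (R.map fun x => t x * (u x) ^ 2).sum := by
  classical
  rw [Finset.sum_multiset_map_count, Finset.sum_multiset_map_count,
    Finset.sum_multiset_map_count]
  apply Finset.sum_sq_le_sum_mul_sum_of_sq_eq_mul
  · intro i hi
    simp only [nsmul_eq_mul]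
    exact mul_nonneg (Nat.cast_nonneg _) (ht i (Multiset.mem_toFinset.mp hi))
  · intro i hi
    simp only [nsmul_eq_mul]
    exact mul_nonneg (Nat.cast_nonneg _)
      (mul_nonneg (ht i (Multiset.mem_toFinset.mp hi)) (sq_nonneg _))
  · intro i hi
    simp only [nsmul_eq_mul]
    ring

set_option maxHeartbeats 1000000 in
/-- The key barrier step. -/
lemma barrier_step (p : ℝ[X]) (k : ℕ) (hk : 1 ≤ k) (hm : p.Monic) (hd : p.natDegree = k)
    (hs : p.Splits) (φ : ℝ) (hφ : 0 < φ) (b : ℝ)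
    (hb : ∀ r ∈ p.roots, b < r)
    (hT : (p.roots.map fun r => (r - b)⁻¹).sum ≤ φ) :
    (oneSubD p).Monic ∧ (oneSubD p).natDegree = k ∧ (oneSubD p).Splits ∧
    (∀ s ∈ (oneSubD p).roots, b + 1/(1+φ) < s) ∧
    ((oneSubD p).roots.map fun s => (s - (b + 1/(1+φ)))⁻¹).sum ≤
      (p.roots.map fun r => (r - b)⁻¹).sum := by
  have hp0 : p ≠ 0 := hm.ne_zero
  have hdeg1 : 1 ≤ p.natDegree := hd ▸ hk
  obtain ⟨hqm, hqd⟩ := oneSubD_monic_natDegree hm hdeg1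
  set q := oneSubD p with hqdef
  have hq0 : q ≠ 0 := hqm.ne_zero
  have hcards : Multiset.card p.roots = k := by
    rw [splits_iff_card_roots] at hs; rw [hs, hd]
  have hqsplits : q.Splits := by
    rw [splits_iff_card_roots]
    refine le_antisymm (card_roots' q) ?_
    calc q.natDegree = p.natDegree := hqd
      _ = Multiset.card p.roots := by rw [hcards, hd]
      _ ≤ Multiset.card q.roots := card_roots_le_oneSubD p hp0
  set R := p.roots with hR
  set δ : ℝ := 1/(1+φ) with hδ
  set b' : ℝ := b + δ with hb'def
  have h1φ : 0 < 1 + φ := by linarith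
  have hδpos : 0 < δ := by rw [hδ]; positivity
  -- all roots are > b'
  have hTnn : ∀ r ∈ R, 0 < (r - b)⁻¹ := fun r hr => inv_pos.mpr (by linarith [hb r hr])
  have hb'lt : ∀ r ∈ R, b' < r := by
    intro r hr
    have h1 : (r - b)⁻¹ ≤ (R.map fun r => (r - b)⁻¹).sum := by
      apply Multiset.single_le_sum
      · intro y hy
        obtain ⟨x, hx, rfl⟩ := Multiset.mem_map.mp hy
        exact (hTnn x hx).le
      · exact Multiset.mem_map_of_mem _ hr
    have h2 : (r - b)⁻¹ ≤ φ := le_trans h1 hT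
    have h3 : 0 < r - b := by linarith [hb r hr]
    have h4 : (r - b) * (r - b)⁻¹ = 1 := mul_inv_cancel₀ (ne_of_gt h3)
    have h5 : (1 + φ) * (1/(1+φ)) = 1 := mul_one_div_cancel (ne_of_gt h1φ)
    rw [hb'def, hδ]
    nlinarith [h2, h3, h4, h5, hφ]
  have hne' : ∀ r ∈ R, r ≠ b' := fun r hr => ne_of_gt (hb'lt r hr)
  have hpeq : p = (R.map fun a => X - C a).prod := hs.eq_prod_roots_of_monic hm
  -- abbreviations
  set P : ℝ := eval b' p with hP
  set U : ℝ := (R.map fun r => (r - b')⁻¹).sum with hU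
  set B : ℝ := (R.map fun r => ((r - b')⁻¹) ^ 2).sum with hB
  set T : ℝ := (R.map fun r => (r - b)⁻¹).sum with hTd
  have hPne : P ≠ 0 := by rw [hP, hpeq]; exact eval_prodXsub_ne_zero hne'
  -- sign conversions
  have hconv1 : (R.map fun r => (b' - r)⁻¹).sum = -U := by
    rw [hU, ← msum_neg]
    apply congrArg
    apply Multiset.map_congr rfl
    intro r _
    rw [show b' - r = -(r - b') by ring, inv_neg]
  have hconv2 : (R.map fun r => ((b' - r)⁻¹) ^ 2).sum = B := by
    rw [hB]
    apply congrArg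
    apply Multiset.map_congr rfl
    intro r _
    rw [show b' - r = -(r - b') by ring, inv_neg]
    ring
  have e2 : eval b' (derivative p) = P * (-U) := by
    rw [hP, hpeq, eval_deriv_prodXsub R b' hne', hconv1]
  have e3 : eval b' (derivative (derivative p)) = P * (U ^ 2 - B) := by
    rw [hP, hpeq, eval_deriv2_prodXsub R b' hne', hconv1, hconv2]
    ring
  have eq_evq : eval b' q = P * (1 + U) := by
    rw [hqdef, oneSubD, eval_sub, ← hP, e2]; ring
  have hUpos : 0 ≤ U := msum_nonneg (fun r hr => (inv_pos.mpr (by linarith [hb'lt r hr])).le)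
  have hqevne : eval b' q ≠ 0 := by
    rw [eq_evq]
    exact mul_ne_zero hPne (by linarith)
  -- (a) all roots of q are > b'
  have hSgt : ∀ s ∈ q.roots, b' < s := by
    intro s hsmem
    by_contra hcon
    push_neg at hcon
    have hsroot : q.IsRoot s := (mem_roots hq0).mp hsmem
    have hnes : ∀ r ∈ R, r ≠ s := fun r hr => ne_of_gt (lt_of_le_of_lt hcon (hb'lt r hr))
    have hPsne : eval s p ≠ 0 := by rw [hpeq]; exact eval_prodXsub_ne_zero hnes
    have e2s : eval s (derivative p) = eval s p * (R.map fun r => (s - r)⁻¹).sum := by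
      rw [hpeq] 
      exact eval_deriv_prodXsub R s hnes
    have hW : (R.map fun r => (s - r)⁻¹).sum ≤ 0 := by
      apply msum_nonpos
      intro r hr
      have : s - r < 0 := by have := hb'lt r hr; linarith
      exact (inv_nonpos.mpr this.le)
    have : eval s q = eval s p * (1 - (R.map fun r => (s - r)⁻¹).sum) := by
      rw [hqdef, oneSubD, eval_sub, e2s]; ring
    have : eval s q ≠ 0 := by
      rw [this]
      exact mul_ne_zero hPsne (by linarith)
    exact this hsroot
  have hneS : ∀ s ∈ q.roots, s ≠ b' := fun s hs' => ne_of_gt (hSgt s hs')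
  -- (b) the sum identity for q
  set V : ℝ := (q.roots.map fun s => (s - b')⁻¹).sum with hV
  have hqeq : q = (q.roots.map fun a => X - C a).prod :=
    hqsplits.eq_prod_roots_of_monic hqm
  have hconvq : (q.roots.map fun s => (b' - s)⁻¹).sum = -V := by
    rw [hV, ← msum_neg]
    apply congrArg
    apply Multiset.map_congr rfl
    intro r _
    rw [show b' - r = -(r - b') by ring, inv_neg]
  have e2q : eval b' (derivative q) = eval b' q * (-V) := by
    conv_lhs => rw [hqeq]
    conv_rhs => rw [hqeq]
    rw [eval_deriv_prodXsub q.roots b' hneS, hconvq]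
  have hderq : derivative q = derivative p - derivative (derivative p) := by
    rw [hqdef, oneSubD, derivative_sub]
  have keyid : (1 + U) * V = U + U ^ 2 - B := by
    have h1 : eval b' (derivative q) = P * (-U) - P * (U ^ 2 - B) := by
      rw [hderq, eval_sub, e2, e3]
    rw [e2q, eq_evq] at h1
    have h2 : P * ((1 + U) * V) = P * (U + U ^ 2 - B) := by linear_combination -h1
    exact mul_left_cancel₀ hPne h2
  -- numeric part
  set C2 : ℝ := (R.map fun r => (r - b)⁻¹ * (r - b')⁻¹).sum with hC2
  set D2 : ℝ := (R.map fun r => (r - b)⁻¹ * ((r - b')⁻¹) ^ 2).sum with hD2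
  have hδφ : δ * (1 + φ) = 1 := by rw [hδ]; field_simp
  have hptfacts : ∀ r ∈ R, 0 < r - b ∧ 0 < r - b' := fun r hr =>
    ⟨by linarith [hb r hr], by linarith [hb'lt r hr]⟩
  have hsum1 : U - T = δ * C2 := by
    rw [hU, hTd, ← msum_sub, hC2, ← msum_mul_left]
    apply congrArg
    apply Multiset.map_congr rfl
    intro r hr
    obtain ⟨h1, h2⟩ := hptfacts r hr
    have hδval : r - b = (r - b') + δ := by rw [hb'def]; ring
    field_simp
    rw [hδval]; ring
  have hsum2 : B = C2 + δ * D2 := by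
    rw [hB, hC2, hD2, ← msum_mul_left, ← msum_add]
    apply congrArg
    apply Multiset.map_congr rfl
    intro r hr
    obtain ⟨h1, h2⟩ := hptfacts r hr
    have hδval : r - b = (r - b') + δ := by rw [hb'def]; ring
    field_simp
    rw [hδval]
  have hCS : C2 ^ 2 ≤ T * D2 := by
    rw [hC2, hD2, hTd]
    exact multiset_cauchy R (fun r => (r - b)⁻¹) (fun r => (r - b')⁻¹)
      (fun r hr => (hTnn r hr).le)
  have hC2nn : 0 ≤ C2 := msum_nonneg fun r hr => by
    obtain ⟨h1, h2⟩ := hptfacts r hr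
    positivity
  have hD2nn : 0 ≤ D2 := msum_nonneg fun r hr => by
    obtain ⟨h1, h2⟩ := hptfacts r hr
    positivity
  have hRne : ∃ r, r ∈ R := by
    apply Multiset.exists_mem_of_ne_zero
    intro h0
    rw [h0] at hcards
    simp at hcards
    omega
  have hTpos : 0 < T := by
    obtain ⟨r0, hr0⟩ := hRne
    have h1 : (r0 - b)⁻¹ ≤ T := by
      rw [hTd]
      apply Multiset.single_le_sum
      · intro y hy
        obtain ⟨x, hx, rfl⟩ := Multiset.mem_map.mp hy
        exact (hTnn x hx).le
      · exact Multiset.mem_map_of_mem _ hr0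
    exact lt_of_lt_of_le (hTnn r0 hr0) h1
  have hUgeT : T ≤ U := by nlinarith [hsum1, mul_nonneg hδpos.le hC2nn]
  have hkey : C2 * (U - φ) ≤ D2 := by
    rcases le_or_gt U φ with hUφ | hUφ
    · calc C2 * (U - φ) ≤ 0 := mul_nonpos_of_nonneg_of_nonpos hC2nn (by linarith)
        _ ≤ D2 := hD2nn
    · have hC2val : C2 = (1 + φ) * (U - T) := by
        linear_combination (-(1 + φ)) * hsum1 - C2 * hδφ
      have claim1 : T * (U - φ) ≤ C2 := by
        rw [hC2val]
        nlinarith [mul_nonneg (sub_nonneg.mpr hT) (sub_nonneg.mpr hUφ.le),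
          mul_nonneg hφ.le (sub_nonneg.mpr hT), hUgeT]
      have h3 : T * (C2 * (U - φ)) ≤ T * D2 := by
        calc T * (C2 * (U - φ)) = C2 * (T * (U - φ)) := by ring
          _ ≤ C2 * C2 := by
              apply mul_le_mul_of_nonneg_left claim1 hC2nn
          _ = C2 ^ 2 := by ring
          _ ≤ T * D2 := hCS
      exact le_of_mul_le_mul_left h3 hTpos
  have expand : U + U ^ 2 - B - T * (1 + U) = δ * (C2 * (U - φ) - D2) := by
    linear_combination (1 + U) * hsum1 - hsum2 + C2 * hδφ
  have main : U + U ^ 2 - B ≤ T * (1 + U) := by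
    have h1 : δ * (C2 * (U - φ) - D2) ≤ 0 :=
      mul_nonpos_of_nonneg_of_nonpos hδpos.le (by linarith)
    linarith [expand, h1]
  have hVT : V ≤ T := by
    have h1U : (0:ℝ) < 1 + U := by linarith
    have h2 : (1 + U) * V ≤ (1 + U) * T := by rw [keyid]; linarith [main]
    exact le_of_mul_le_mul_left h2 h1U
  exact ⟨hqm, hqd.trans hd, hqsplits, hSgt, hVT⟩

lemma barrier_iter (k : ℕ) (hk : 1 ≤ k) (φ : ℝ) (hφ : 0 < φ) (m : ℕ) :
    (oneSubD^[m] (X ^ k : ℝ[X])).Monic ∧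
    (oneSubD^[m] (X ^ k : ℝ[X])).natDegree = k ∧
    (oneSubD^[m] (X ^ k : ℝ[X])).Splits ∧
    (∀ r ∈ (oneSubD^[m] (X ^ k : ℝ[X])).roots, -(k/φ) + m * (1/(1+φ)) < r) ∧
    ((oneSubD^[m] (X ^ k : ℝ[X])).roots.map
      fun r => (r - (-(k/φ) + m * (1/(1+φ))))⁻¹).sum ≤ φ := by
  have hk0 : (0:ℝ) < k := by exact_mod_cast hk
  induction m with
  | zero =>
    have hroots : (X ^ k : ℝ[X]).roots = k • ({0} : Multiset ℝ) := by
      rw [roots_pow, roots_X]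
    refine ⟨by simpa using monic_X_pow k, by simp, ?_, ?_, ?_⟩
    · simp only [Function.iterate_zero_apply]
      exact Splits.X.pow _
    · intro r hr
      simp only [Function.iterate_zero_apply, hroots] at hr
      rw [Multiset.mem_nsmul, Multiset.mem_singleton] at hr
      obtain ⟨-, hr⟩ := hr
      subst hr
      simp only [Nat.cast_zero, zero_mul, add_zero]
      have : 0 < k/φ := by positivity
      linarith
    · simp only [Function.iterate_zero_apply, hroots, Multiset.map_nsmul,
        Multiset.map_singleton, Multiset.sum_nsmul, Multiset.sum_singleton,
        Nat.cast_zero, zero_mul, add_zero, zero_sub, neg_neg, nsmul_eq_mul]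
      rw [inv_div, mul_div_cancel₀ _ (by positivity : (k:ℝ) ≠ 0)]
  | succ m ih =>
    obtain ⟨hm, hd, hs, hroots, hsum⟩ := ih
    have hstep := barrier_step _ k hk hm hd hs φ hφ _ hroots hsum
    obtain ⟨h1, h2, h3, h4, h5⟩ := hstep
    rw [← Function.iterate_succ_apply' oneSubD m] at h1 h2 h3 h4 h5
    have hbeq : -(↑k/φ) + ↑m * (1/(1+φ)) + 1/(1+φ) = -(↑k/φ) + (↑(m+1)) * (1/(1+φ)) := by
      push_cast; ring
    refine ⟨h1, h2, h3, ?_, ?_⟩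
    · intro r hr
      rw [← hbeq]
      exact h4 r hr
    · rw [← hbeq]
      exact le_trans h5 hsum

end LaguerreAux

/-- **Lower bound for the roots of `(1-D)ⁿ x^k` (associated Laguerre
polynomials).**  For `1 ≤ k ≤ n`, the polynomial `(1-D)ⁿ x^k` has degree `k`,
is real-rooted, and all of its roots are at least
`(1 - √(k/n))² n = (√n - √k)²`. -/
theorem laguerre_smallest_root_bound (n k : ℕ) (hk1 : 1 ≤ k) (hkn : k ≤ n) :
    (oneSubD^[n] (Polynomial.X ^ k)).natDegree = k ∧
    RealRooted (oneSubD^[n] (Polynomial.X ^ k)) ∧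
    ∀ x ∈ (oneSubD^[n] (Polynomial.X ^ k)).roots,
      (Real.sqrt n - Real.sqrt k) ^ 2 ≤ x := by
  obtain ⟨-, hdeg, hsplits, -, -⟩ := barrier_iter k hk1 1 one_pos n
  refine ⟨hdeg, hsplits, ?_⟩
  intro x hx
  have hbound : ∀ φ : ℝ, 0 < φ → -(k/φ) + n * (1/(1+φ)) < x := by
    intro φ hφ
    obtain ⟨-, -, -, hroots, -⟩ := barrier_iter k hk1 φ hφ n
    exact hroots x hx
  have hk0 : (0:ℝ) < k := by exact_mod_cast hk1
  have hn0 : (0:ℝ) < n := by exact_mod_cast (hk1.trans hkn)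
  set s : ℝ := Real.sqrt n with hs
  set t : ℝ := Real.sqrt k with ht
  have hspos : 0 < s := Real.sqrt_pos.mpr hn0
  have htpos : 0 < t := Real.sqrt_pos.mpr hk0
  have hts : t ≤ s := Real.sqrt_le_sqrt (by exact_mod_cast hkn)
  have hksq : (t:ℝ)^2 = k := Real.sq_sqrt (by positivity)
  have hnsq : (s:ℝ)^2 = n := Real.sq_sqrt (by positivity)
  rcases lt_or_eq_of_le hkn with hlt | heq
  · -- k < n : plug in the optimal φ
    have htlt : t < s := by
      rw [hs, ht]
      exact Real.sqrt_lt_sqrt (by positivity) (by exact_mod_cast hlt)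
    have hst0 : 0 < s - t := by linarith
    set φ : ℝ := t / (s - t) with hφdef
    have hφpos : 0 < φ := by positivity
    have h1φ : 1 + φ = s / (s - t) := by
      rw [hφdef]; field_simp; ring
    have hval : -(↑k/φ) + ↑n * (1/(1+φ)) = (s - t)^2 := by
      rw [hφdef, h1φ, ← hksq, ← hnsq]
      field_simp
      ring
    have := hbound φ hφpos
    rw [hval] at this
    linarith
  · -- k = n : the bound is 0
    have hst : s = t := by rw [hs, ht, heq]
    rw [hst, sub_self]
    norm_num
    by_contra hcon
    push_neg at hcon
    set φ : ℝ := (2 * n) / (-x) with hφdef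
    have hφpos : 0 < φ := by
      apply div_pos (by positivity) (by linarith)
    have hb := hbound φ hφpos
    have h1 : ↑k / φ = -x / 2 * (↑k / ↑n) := by
      rw [hφdef]; field_simp
    have h2 : ↑k / φ = -x / 2 := by
      rw [h1, heq, div_self (ne_of_gt hn0), mul_one]
    have h3 : 0 ≤ ↑n * (1/(1+φ)) := by positivity
    rw [h2] at hb
    linarith
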